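/- The category of partial representations of G on K-modules is isomorphic to the category of left K_par G-modules, via [g]·m := π_g(m). -/

import Mathlib

/-- The defining relations of Exel's semigroup `S(G)` of a group `G`:
`[1] = 1`, `[s⁻¹][s][t] = [s⁻¹][st]`, `[s][t][t⁻¹] = [st][t⁻¹]`. -/
inductive ExelRel (G : Type*) [Group G] : FreeMonoid G → FreeMonoid G → Prop
  | one : ExelRel G (FreeMonoid.of 1) 1
  | left (s t : G) : ExelRel G
      (FreeMonoid.of s⁻¹ * FreeMonoid.of s * FreeMonoid.of t)
      (FreeMonoid.of s⁻¹ * FreeMonoid.of (s * t))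
  | right (s t : G) : ExelRel G
      (FreeMonoid.of s * FreeMonoid.of t * FreeMonoid.of t⁻¹)
      (FreeMonoid.of (s * t) * FreeMonoid.of t⁻¹)

/-- The congruence on the free monoid on `G` generated by the Exel relations. -/
def ExelCon (G : Type*) [Group G] : Con (FreeMonoid G) := conGen (ExelRel G)

/-- Exel's semigroup (an inverse monoid) `S(G)` of the group `G`. -/
abbrev ExelMonoid (G : Type*) [Group G] := (ExelCon G).Quotient

/-- The canonical generator `[g]` of `S(G)`. -/
def ExelMonoid.of {G : Type*} [Group G] (g : G) : ExelMonoid G :=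
  (ExelCon G).mk' (FreeMonoid.of g)

/-- The idempotent `e_g := [g][g⁻¹]` in `S(G)`. -/
def ExelMonoid.e {G : Type*} [Group G] (g : G) : ExelMonoid G :=
  ExelMonoid.of g * ExelMonoid.of g⁻¹

/-- The partial group algebra `K_par G`: the semigroup `K`-algebra of Exel's semigroup. -/
abbrev KparG (K G : Type*) [CommRing K] [Group G] := MonoidAlgebra K (ExelMonoid G)

/-- The canonical generator `[g]` of `K_par G`. -/
noncomputable def pr (K : Type*) {G : Type*} [CommRing K] [Group G] (g : G) : KparG K G :=
  MonoidAlgebra.of K (ExelMonoid G) (ExelMonoid.of g)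

/-- The idempotent `e_g := [g][g⁻¹]` in `K_par G`. -/
noncomputable def eK (K : Type*) {G : Type*} [CommRing K] [Group G] (g : G) : KparG K G :=
  pr K g * pr K g⁻¹

open CategoryTheory

universe u

/-- An object of the category of partial representations of `G` on `K`-modules. -/
structure ParRep (K G : Type u) [CommRing K] [Group G] : Type (u + 1) where
  carrier : Type u
  [isAddCommGroup : AddCommGroup carrier]
  [isModule : Module K carrier]
  π : G → carrier →ₗ[K] carrier
  map_one : π 1 = LinearMap.id
  rel_left : ∀ s t : G, π s ∘ₗ π t ∘ₗ π t⁻¹ = π (s * t) ∘ₗ π t⁻¹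
  rel_right : ∀ s t : G, π s⁻¹ ∘ₗ π s ∘ₗ π t = π s⁻¹ ∘ₗ π (s * t)

attribute [instance] ParRep.isAddCommGroup ParRep.isModule

/-- The category of partial representations of `G` on `K`-modules: morphisms are
`K`-linear maps intertwining the partial representations. -/
instance ParRep.category (K G : Type u) [CommRing K] [Group G] :
    Category (ParRep K G) where
  Hom X Y := { f : X.carrier →ₗ[K] Y.carrier // ∀ g : G, f ∘ₗ X.π g = Y.π g ∘ₗ f }
  id X := ⟨LinearMap.id, fun g => by ext m; rfl⟩
  comp {X Y Z} f g := ⟨g.1 ∘ₗ f.1, fun h => by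
    rw [LinearMap.comp_assoc, f.2, ← LinearMap.comp_assoc, g.2, LinearMap.comp_assoc]⟩
  id_comp f := Subtype.ext (LinearMap.comp_id f.1)
  comp_id f := Subtype.ext (LinearMap.id_comp f.1)
  assoc f g h := Subtype.ext (LinearMap.comp_assoc f.1 g.1 h.1).symm

section
variable {K G : Type u} [CommRing K] [Group G]

/-- Extend a partial representation to Exel's monoid. -/
noncomputable def ParRep.repHom (X : ParRep K G) : ExelMonoid G →* Module.End K X.carrier :=
  Con.lift _ (FreeMonoid.lift X.π) (by
    rw [ExelCon]
    refine Con.conGen_le.mpr ?_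
    rintro x y (⟨⟩ | ⟨s, t⟩ | ⟨s, t⟩) <;>
      simp only [Con.ker_rel, map_mul, map_one, FreeMonoid.lift_eval_of,
        Module.End.mul_eq_comp, LinearMap.comp_assoc]
    · simp [X.map_one]; rfl
    · exact X.rel_right s t
    · exact X.rel_left s t)

@[simp] lemma ParRep.repHom_of (X : ParRep K G) (g : G) :
    X.repHom (ExelMonoid.of g) = X.π g := FreeMonoid.lift_eval_of _ _

/-- Extend a partial representation to the partial group algebra. -/
noncomputable def ParRep.algHom (X : ParRep K G) :
    KparG K G →ₐ[K] Module.End K X.carrier :=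
  MonoidAlgebra.lift K (Module.End K X.carrier) (ExelMonoid G) X.repHom

@[simp] lemma ParRep.algHom_of (X : ParRep K G) (x : ExelMonoid G) :
    X.algHom (MonoidAlgebra.of K (ExelMonoid G) x) = X.repHom x :=
  MonoidAlgebra.lift_of X.repHom x

/-- The `K_par G`-module structure on a partial representation. -/
noncomputable def ParRep.kparModule (X : ParRep K G) : Module (KparG K G) X.carrier :=
  Module.compHom X.carrier X.algHom.toRingHom

lemma ParRep.hom_comm_repHom {X Y : ParRep K G} (f : X ⟶ Y) (x : ExelMonoid G) :
    f.1 ∘ₗ X.repHom x = Y.repHom x ∘ₗ f.1 := by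
  induction x using Con.induction_on with
  | H w =>
    induction w using FreeMonoid.recOn with
    | one =>
      have h1 : ((1 : FreeMonoid G) : ExelMonoid G) = 1 := rfl
      rw [h1, X.repHom.map_one, Y.repHom.map_one]; rfl
    | of_mul g w ih =>
      have h2 : ((FreeMonoid.of g * w : FreeMonoid G) : ExelMonoid G)
          = ExelMonoid.of g * (w : ExelMonoid G) := rfl
      rw [h2, map_mul, map_mul, repHom_of, repHom_of, Module.End.mul_eq_comp,
        Module.End.mul_eq_comp, ← LinearMap.comp_assoc, f.2 g, LinearMap.comp_assoc, ih,
        ← LinearMap.comp_assoc]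

lemma ParRep.hom_comm_algHom {X Y : ParRep K G} (f : X ⟶ Y) (a : KparG K G) :
    f.1 ∘ₗ X.algHom a = Y.algHom a ∘ₗ f.1 := by
  induction a using MonoidAlgebra.induction_on with
  | of x => rw [algHom_of, algHom_of]; exact hom_comm_repHom f x
  | add a b ha hb =>
    rw [map_add, map_add, LinearMap.add_comp, LinearMap.comp_add, ha, hb]
  | smul k a ha =>
    rw [map_smul, map_smul, LinearMap.smul_comp, LinearMap.comp_smul, ha]

/-- The functor from partial representations to `K_par G`-modules. -/
noncomputable def parRepToMod : ParRep K G ⥤ ModuleCat.{u} (KparG K G) where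
  obj X := @ModuleCat.of (KparG K G) _ X.carrier X.isAddCommGroup X.kparModule
  map {X Y} f := @ModuleCat.ofHom (KparG K G) _ X.carrier Y.carrier _ X.kparModule _ Y.kparModule <|
    @LinearMap.mk (KparG K G) (KparG K G) _ _ (RingHom.id _) X.carrier Y.carrier _ _
      X.kparModule Y.kparModule
      { toFun := f.1, map_add' := f.1.map_add }
      (fun a m => congrFun (congrArg DFunLike.coe (ParRep.hom_comm_algHom f a)) m)
  map_id X := rfl
  map_comp f g := rfl

end

section
variable {K G : Type u} [CommRing K] [Group G]

lemma ExelMonoid.of_one : ExelMonoid.of (1 : G) = 1 :=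
  Quotient.sound (ConGen.Rel.of _ _ ExelRel.one)

lemma ExelMonoid.rel_left (s t : G) :
    ExelMonoid.of s⁻¹ * ExelMonoid.of s * ExelMonoid.of t
      = ExelMonoid.of s⁻¹ * ExelMonoid.of (s * t) :=
  Quotient.sound (ConGen.Rel.of _ _ (ExelRel.left s t))

lemma ExelMonoid.rel_right (s t : G) :
    ExelMonoid.of s * ExelMonoid.of t * ExelMonoid.of t⁻¹
      = ExelMonoid.of (s * t) * ExelMonoid.of t⁻¹ :=
  Quotient.sound (ConGen.Rel.of _ _ (ExelRel.right s t))

lemma pr_one : pr K (1 : G) = 1 := by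
  rw [pr, ExelMonoid.of_one, map_one]

lemma pr_rel_left (s t : G) :
    pr K s⁻¹ * pr K s * pr K t = pr K s⁻¹ * pr K (s * t) := by
  simp only [pr, ← map_mul, ExelMonoid.rel_left]

lemma pr_rel_right (s t : G) :
    pr K s * pr K t * pr K t⁻¹ = pr K (s * t) * pr K t⁻¹ := by
  simp only [pr, ← map_mul, ExelMonoid.rel_right]

/-- The `K`-module structure on a `K_par G`-module, via `algebraMap`. -/
noncomputable def kModOfKpar (M : Type u) [AddCommGroup M] [Module (KparG K G) M] :
    Module K M :=
  Module.compHom M (algebraMap K (KparG K G))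

/-- The partial representation underlying a `K_par G`-module. -/
noncomputable def parRepOfMod (M : ModuleCat.{u} (KparG K G)) : ParRep K G :=
  letI : Module K M := kModOfKpar M
  { carrier := M
    isModule := kModOfKpar M
    π := fun g =>
      { toFun := fun m => pr K g • m
        map_add' := fun a b => smul_add _ a b
        map_smul' := fun k m => by
          show pr K g • (algebraMap K (KparG K G) k • m)
              = algebraMap K (KparG K G) k • (pr K g • m)
          rw [← mul_smul, ← mul_smul, Algebra.commutes] }
    map_one := by
      apply LinearMap.ext; intro m
      show pr K (1 : G) • m = m
      rw [pr_one, one_smul]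
    rel_left := fun s t => by
      apply LinearMap.ext; intro m
      show pr K s • pr K t • pr K t⁻¹ • m = pr K (s * t) • pr K t⁻¹ • m
      rw [← mul_smul, ← mul_smul, ← mul_smul, pr_rel_right]
    rel_right := fun s t => by
      apply LinearMap.ext; intro m
      show pr K s⁻¹ • pr K s • pr K t • m = pr K s⁻¹ • pr K (s * t) • m
      rw [← mul_smul, ← mul_smul, ← mul_smul, pr_rel_left] }

/-- A `K_par G`-linear map induces a morphism of partial representations. -/
noncomputable def modHomToParHom {M N : ModuleCat.{u} (KparG K G)} (f : M ⟶ N) :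
    parRepOfMod M ⟶ parRepOfMod N :=
  ⟨{ toFun := fun (m : M) => f m
     map_add' := f.hom.map_add
     map_smul' := fun k (m : M) => by
       show f ((algebraMap K (KparG K G) k) • m) = algebraMap K (KparG K G) k • f m
       rw [map_smul]  },
   fun g => LinearMap.ext fun (m : M) => by
       show f (pr K g • m) = pr K g • f m
       rw [map_smul]⟩

/-- The functor from `K_par G`-modules to partial representations. -/
noncomputable def modToParRep : ModuleCat.{u} (KparG K G) ⥤ ParRep K G where
  obj M := parRepOfMod M
  map f := modHomToParHom f
  map_id M := rfl
  map_comp f g := rfl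

end

section
variable {K G : Type u} [CommRing K] [Group G]

lemma cast_eq_self {T : Type u} (h : T = T) (x : T) : cast h x = x :=
  eq_of_heq (cast_heq h x)

lemma repHom_parRepOfMod (M : ModuleCat.{u} (KparG K G)) (x : ExelMonoid G) (m : M) :
    (parRepOfMod M).repHom x m = MonoidAlgebra.of K (ExelMonoid G) x • m := by
  induction x using Con.induction_on with
  | H w =>
    induction w using FreeMonoid.recOn with
    | one =>
      have h1 : ((1 : FreeMonoid G) : ExelMonoid G) = 1 := rfl
      rw [h1, (parRepOfMod M).repHom.map_one, map_one, one_smul]; rfl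
    | of_mul g w ih =>
      have h2 : ((FreeMonoid.of g * w : FreeMonoid G) : ExelMonoid G)
          = ExelMonoid.of g * (w : ExelMonoid G) := rfl
      erw [h2, map_mul, map_mul, mul_smul, Module.End.mul_apply, ih, ParRep.repHom_of]
      rfl

lemma algHom_parRepOfMod (M : ModuleCat.{u} (KparG K G)) (a : KparG K G) (m : M) :
    (parRepOfMod M).algHom a m = a • m := by
  induction a using MonoidAlgebra.induction_on with
  | of x => rw [ParRep.algHom_of]; exact repHom_parRepOfMod M x m
  | add a b ha hb => erw [map_add, LinearMap.add_apply, ha, hb, add_smul]; rfl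
  | smul k a ha =>
    erw [map_smul, LinearMap.smul_apply, ha]
    show algebraMap K (KparG K G) k • (a • m) = (k • a) • m
    rw [← mul_smul, ← Algebra.smul_def]

lemma kparModule_parRepOfMod (M : ModuleCat.{u} (KparG K G)) :
    (parRepOfMod M).kparModule = M.isModule :=
  Module.ext' _ _ fun a m => algHom_parRepOfMod M a m

lemma moduleCat_obj_eq (M : ModuleCat.{u} (KparG K G)) :
    (modToParRep ⋙ parRepToMod).obj M = M := by
  rcases M with @⟨Mc, i1, i2⟩
  exact congrArg (fun m => @ModuleCat.of (KparG K G) _ Mc i1 m)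
    (kparModule_parRepOfMod (@ModuleCat.of (KparG K G) _ Mc i1 i2))

lemma ParRep.mk_eq {M : Type u} {i : AddCommGroup M} {m₁ m₂ : Module K M}
    (π₁ : G → @LinearMap K K _ _ (RingHom.id K) M M i.toAddCommMonoid i.toAddCommMonoid m₁ m₁)
    (π₂ : G → @LinearMap K K _ _ (RingHom.id K) M M i.toAddCommMonoid i.toAddCommMonoid m₂ m₂)
    {h₁ h₂ h₃ h₁' h₂' h₃'} (hm : m₁ = m₂) (hπ : ∀ g x, π₁ g x = π₂ g x) :
    @ParRep.mk K G _ _ M i m₁ π₁ h₁ h₂ h₃ = @ParRep.mk K G _ _ M i m₂ π₂ h₁' h₂' h₃' := by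
  subst hm
  have : π₁ = π₂ := funext fun g => LinearMap.ext (hπ g)
  subst this
  rfl

lemma parRep_obj_eq (X : ParRep K G) : (parRepToMod ⋙ modToParRep).obj X = X := by
  rcases X with @⟨M, i1, i2, π, hone, hl, hr⟩
  apply ParRep.mk_eq
  · refine Module.ext' _ _ fun k (m : M) => ?_
    show (@ParRep.mk K G _ _ M i1 i2 π hone hl hr).algHom (algebraMap K (KparG K G) k) m
        = k • m
    rw [AlgHom.commutes, Module.algebraMap_end_apply]
  · intro g m
    show (@ParRep.mk K G _ _ M i1 i2 π hone hl hr).algHom (pr K g) m = π g m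
    rw [pr, ParRep.algHom_of, ParRep.repHom_of]

lemma ParRep.eqToHom_fst {X Y : ParRep K G} (h : X = Y) (m : X.carrier) :
    (eqToHom h).1 m = cast (congrArg ParRep.carrier h) m := by subst h; rfl

lemma ModuleCat.eqToHom_apply' {R : Type u} [Ring R] {M N : ModuleCat.{u} R} (h : M = N)
    (m : M) : eqToHom h m = cast (congrArg ModuleCat.carrier h) m := by subst h; rfl

lemma comp_eq_id₁ : parRepToMod ⋙ modToParRep = 𝟭 (ParRep K G) := by
  refine CategoryTheory.Functor.ext parRep_obj_eq fun X Y f => ?_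
  apply Subtype.ext
  apply LinearMap.ext
  intro m
  show f.1 m = (eqToHom ((parRep_obj_eq Y).symm)).1 (f.1 ((eqToHom (parRep_obj_eq X)).1 m))
  rw [ParRep.eqToHom_fst, ParRep.eqToHom_fst]; rfl

lemma comp_eq_id₂ : modToParRep ⋙ parRepToMod = 𝟭 (ModuleCat.{u} (KparG K G)) := by
  refine CategoryTheory.Functor.ext moduleCat_obj_eq fun M N f => ?_
  apply ModuleCat.hom_ext
  apply LinearMap.ext
  intro m
  show f m = (eqToHom ((moduleCat_obj_eq N).symm)) (f ((eqToHom (moduleCat_obj_eq M)) m))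
  rw [ModuleCat.eqToHom_apply', ModuleCat.eqToHom_apply']; rfl

end


/-- The category of partial representations of `G` on `K`-modules is isomorphic to the
category of left `K_par G`-modules (via `[g] • m := π g m`). -/
theorem parRep_iso_kparG_mod (K G : Type u) [CommRing K] [Group G] :
    Nonempty (Cat.of (ParRep K G) ≅ Cat.of (ModuleCat.{u} (KparG K G))) :=
  ⟨{ hom := parRepToMod.toCatHom, inv := modToParRep.toCatHom,
     hom_inv_id := Cat.ext comp_eq_id₁, inv_hom_id := Cat.ext comp_eq_id₂ }⟩
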